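/- Let A be a Banach algebra with character φ, and suppose m ∈ A** satisfies ‖m‖ = m(φ) = 1 and ⟨m, f·a⟩ = φ(a)⟨m, f⟩ for all f ∈ A*, a ∈ A (a topologically left invariant φ-mean of norm one). If n ∈ A** satisfies ‖n‖ = n(φ) = 1, then n □ m is also a topologically left invariant φ-mean of norm one, where □ denotes the first Arens product, provided ⟨m, f·(ab)⟩ = ⟨m, f·(ba)⟩ for all a,b ∈ A and f ∈ A*. -/
import Mathlib


open scoped Topology
open Filter

noncomputable def fdot {A : Type*} [NonUnitalNormedRing A] [NormedSpace ℂ A]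
    [IsScalarTower ℂ A A] [SMulCommClass ℂ A A] (f : A →L[ℂ] ℂ) (a : A) : A →L[ℂ] ℂ :=
  f.comp (ContinuousLinearMap.mul ℂ A a)

/-- The map f ↦ (a ↦ f·a) as a continuous linear map; (fdotCLM f a) b = f (a * b). -/
noncomputable def fdotCLM {A : Type*} [NonUnitalNormedRing A] [NormedSpace ℂ A]
    [IsScalarTower ℂ A A] [SMulCommClass ℂ A A] :
    (A →L[ℂ] ℂ) →L[ℂ] (A →L[ℂ] (A →L[ℂ] ℂ)) :=
  ((ContinuousLinearMap.compL ℂ A (A →L[ℂ] A) (A →L[ℂ] ℂ)).flip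
    (ContinuousLinearMap.mul ℂ A)).comp (ContinuousLinearMap.compL ℂ A A ℂ)

/-- The map f ↦ m·f, where ⟨m·f, a⟩ = ⟨m, f·a⟩; then the first Arens product is
⟨n □ m, f⟩ = ⟨n, m·f⟩, i.e. n □ m = n.comp (arensL m). -/
noncomputable def arensL {A : Type*} [NonUnitalNormedRing A] [NormedSpace ℂ A]
    [IsScalarTower ℂ A A] [SMulCommClass ℂ A A] (m : (A →L[ℂ] ℂ) →L[ℂ] ℂ) :
    (A →L[ℂ] ℂ) →L[ℂ] (A →L[ℂ] ℂ) :=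
  ((ContinuousLinearMap.compL ℂ A (A →L[ℂ] ℂ) ℂ) m).comp fdotCLM

/-- If m is a topologically left invariant φ-mean of norm one satisfying
⟨m, f·(ab)⟩ = ⟨m, f·(ba)⟩, and ‖n‖ = n(φ) = 1, then n □ m is again a
topologically left invariant φ-mean of norm one. -/
theorem stmt13 {A : Type*} [NonUnitalNormedRing A] [NormedSpace ℂ A]
    [IsScalarTower ℂ A A] [SMulCommClass ℂ A A] [CompleteSpace A]
    (φ : A →L[ℂ] ℂ) (hφmul : ∀ a b : A, φ (a * b) = φ a * φ b) (hφ0 : φ ≠ 0)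
    (m n : (A →L[ℂ] ℂ) →L[ℂ] ℂ)
    (hmn : ‖m‖ = 1) (hm1 : m φ = 1)
    (hminv : ∀ (f : A →L[ℂ] ℂ) (a : A), m (fdot f a) = φ a * m f)
    (hcom : ∀ (f : A →L[ℂ] ℂ) (a b : A), m (fdot f (a * b)) = m (fdot f (b * a)))
    (hnn : ‖n‖ = 1) (hn1 : n φ = 1) :
    ‖n.comp (arensL m)‖ = 1 ∧ (n.comp (arensL m)) φ = 1 ∧
    ∀ (f : A →L[ℂ] ℂ) (a : A),
      (n.comp (arensL m)) (fdot f a) = φ a * (n.comp (arensL m)) f := by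
  have hA : ∀ f : A →L[ℂ] ℂ, arensL m f = (m f) • φ := by
    intro f
    ext a
    have h1 : (arensL m f) a = m (fdot f a) := rfl
    rw [h1, hminv]
    simp [mul_comm]
  have hEq : n.comp (arensL m) = m := by
    ext f
    simp [hA f, hn1]
  rw [hEq]
  exact ⟨hmn, hm1, hminv⟩
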